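/- For every T > 0 and every μ ∈ ℝ there exist constants C₁ > 0 and C₂ > 0 such that for all p, q ∈ ℝ one has C₁(1 + p² + q²) ≤ L_{T,μ}(p,q)^{-1} ≤ C₂(1 + p² + q²). -/

import Mathlib

open MeasureTheory Real Filter

/-- The function `L_{T,μ}(p,q)`, extended continuously across `p²+q² = 2μ`. -/
noncomputable def Lfun (T μ p q : ℝ) : ℝ :=
  if p ^ 2 + q ^ 2 = 2 * μ then (1 - Real.tanh ((p ^ 2 - μ) / (2 * T)) ^ 2) / (2 * T)
  else (Real.tanh ((p ^ 2 - μ) / (2 * T)) + Real.tanh ((q ^ 2 - μ) / (2 * T))) /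
    (p ^ 2 + q ^ 2 - 2 * μ)

/-- `B_{T,μ}(p,q) = L_{T,μ}((p+q)/2, (p−q)/2)`. -/
noncomputable def Bfun (T μ p q : ℝ) : ℝ := Lfun T μ ((p + q) / 2) ((p - q) / 2)

/-- `F_{T,μ}(p) = tanh((p²−μ)/(2T))/(p²−μ)`, extended by `1/(2T)` at `p² = μ`. -/
noncomputable def Ffun (T μ p : ℝ) : ℝ :=
  if p ^ 2 = μ then 1 / (2 * T) else Real.tanh ((p ^ 2 - μ) / (2 * T)) / (p ^ 2 - μ)

/-- `a_{T,μ} = (1/(4π)) ∫ B_{T,μ}(0,q) dq`. -/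
noncomputable def aconst (T μ : ℝ) : ℝ := (1 / (4 * Real.pi)) * ∫ q : ℝ, Bfun T μ 0 q

/-- `A_{T,μ}(p) = (1/(4π)) ∫ B_{T,μ}(p,q) dq`. -/
noncomputable def Afun (T μ p : ℝ) : ℝ := (1 / (4 * Real.pi)) * ∫ q : ℝ, Bfun T μ p q

/-- `G u = u / sinh u`, extended by `1` at `u = 0`. -/
noncomputable def Gfun (u : ℝ) : ℝ := if u = 0 then 1 else u / Real.sinh u

lemma Gfun_pos (u : ℝ) : 0 < Gfun u := by
  unfold Gfun
  rcases eq_or_ne u 0 with h | h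
  · simp [h]
  · rw [if_neg h]
    rcases lt_or_gt_of_ne h with hu | hu
    · exact div_pos_of_neg_of_neg hu (by rwa [Real.sinh_neg_iff])
    · exact div_pos hu (by rwa [Real.sinh_pos_iff])

lemma Gfun_abs (u : ℝ) : Gfun |u| = Gfun u := by
  unfold Gfun
  rcases eq_or_ne u 0 with h | h
  · simp [h]
  · rw [if_neg h, if_neg (abs_ne_zero.mpr h)]
    rcases abs_choice u with h1 | h1
    · rw [h1]
    · rw [h1, Real.sinh_neg, neg_div_neg_eq]

lemma sinh_le_self_mul_cosh {x : ℝ} (hx : 0 ≤ x) : Real.sinh x ≤ x * Real.cosh x := by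
  have key : MonotoneOn (fun t : ℝ => t * Real.cosh t - Real.sinh t) (Set.Ici 0) := by
    have hd : ∀ y : ℝ, HasDerivAt (fun t : ℝ => t * Real.cosh t - Real.sinh t)
        (y * Real.sinh y) y := by
      intro y
      have h := ((hasDerivAt_id y).mul (Real.hasDerivAt_cosh y)).sub (Real.hasDerivAt_sinh y)
      refine h.congr_deriv ?_
      simp only [id, one_mul]; ring
    apply monotoneOn_of_deriv_nonneg (convex_Ici 0)
    · exact (Continuous.sub (continuous_id.mul Real.continuous_cosh)
        Real.continuous_sinh).continuousOn
    · intro y _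
      exact (hd y).differentiableAt.differentiableWithinAt
    · intro y hy
      rw [interior_Ici] at hy
      rw [(hd y).deriv]
      exact mul_nonneg hy.le (Real.sinh_nonneg_iff.mpr hy.le)
  have h0 := key (Set.self_mem_Ici (a := (0:ℝ))) hx hx
  simp at h0
  linarith

lemma cosh_mul_Gfun_lower (u : ℝ) : (1 + |u|) / 2 ≤ Real.cosh u * Gfun u := by
  rw [← Real.cosh_abs, ← Gfun_abs]
  set w := |u| with hw
  have hw0 : 0 ≤ w := abs_nonneg u
  rcases eq_or_lt_of_le hw0 with h | h
  · simp [Gfun, ← h]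
    norm_num
  · have hs : 0 < Real.sinh w := Real.sinh_pos_iff.mpr h
    unfold Gfun
    rw [if_neg h.ne', mul_div_assoc', le_div_iff₀ hs]
    have h1 : Real.sinh w ≤ w * Real.cosh w := sinh_le_self_mul_cosh hw0
    have h2 : Real.sinh w < Real.cosh w := Real.sinh_lt_cosh w
    nlinarith

lemma cosh_mul_Gfun_upper (u : ℝ) : Real.cosh u * Gfun u ≤ 1 + |u| := by
  rw [← Real.cosh_abs, ← Gfun_abs]
  set w := |u| with hw
  have hw0 : 0 ≤ w := abs_nonneg u
  rcases eq_or_lt_of_le hw0 with h | h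
  · simp [Gfun, ← h, Real.cosh_zero]
  · have hs : 0 < Real.sinh w := Real.sinh_pos_iff.mpr h
    unfold Gfun
    rw [if_neg h.ne', mul_div_assoc', div_le_iff₀ hs]
    have h1 : w ≤ Real.sinh w := Real.self_le_sinh_iff.mpr hw0
    have h2 : Real.cosh w - Real.sinh w = Real.exp (-w) := Real.cosh_sub_sinh w
    have h3 : Real.exp (-w) ≤ 1 := Real.exp_le_one_iff.mpr (by linarith)
    nlinarith

set_option maxHeartbeats 1000000 in
lemma Lfun_inv_eq (T : ℝ) (hT : 0 < T) (μ p q : ℝ) :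
    (Lfun T μ p q)⁻¹ = T * (Real.cosh ((p ^ 2 - μ) / (2 * T) + (q ^ 2 - μ) / (2 * T)) +
      Real.cosh ((p ^ 2 - μ) / (2 * T) - (q ^ 2 - μ) / (2 * T))) *
      Gfun ((p ^ 2 - μ) / (2 * T) + (q ^ 2 - μ) / (2 * T)) := by
  set a := (p ^ 2 - μ) / (2 * T) with ha
  set b := (q ^ 2 - μ) / (2 * T) with hb
  have hT' : (2 : ℝ) * T ≠ 0 := by positivity
  have hca : Real.cosh a ≠ 0 := (Real.cosh_pos a).ne'
  have hcb : Real.cosh b ≠ 0 := (Real.cosh_pos b).ne'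
  have hsum : p ^ 2 + q ^ 2 - 2 * μ = 2 * T * (a + b) := by
    rw [ha, hb]; field_simp; ring
  unfold Lfun
  by_cases h : p ^ 2 + q ^ 2 = 2 * μ
  · have hab : a + b = 0 := by
      have : 2 * T * (a + b) = 0 := by rw [← hsum]; linarith
      rcases mul_eq_zero.mp this with h' | h'
      · exact absurd h' hT'
      · exact h'
    have hba : b = -a := by linarith
    rw [if_pos h, hab]
    have htanh : 1 - Real.tanh a ^ 2 = (Real.cosh a ^ 2)⁻¹ := by
      rw [Real.tanh_eq_sinh_div_cosh]
      field_simp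
      exact Real.cosh_sq_sub_sinh_sq a
    rw [htanh]
    simp only [Gfun, if_pos rfl, hba, Real.cosh_zero]
    rw [Real.cosh_sub, Real.cosh_neg, Real.sinh_neg]
    have hcsq := Real.cosh_sq_sub_sinh_sq a
    field_simp
    simp only [ite_true]
    nlinarith [Real.cosh_pos a]
  · have hab : a + b ≠ 0 := by
      intro h'
      apply h
      have := hsum
      rw [h', mul_zero] at this
      linarith
    have hsinh : Real.sinh (a + b) ≠ 0 := by
      rcases lt_or_gt_of_ne hab with h' | h'
      · exact (Real.sinh_neg_iff.mpr h').ne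
      · exact (Real.sinh_pos_iff.mpr h').ne'
    rw [if_neg h]
    have htanh : Real.tanh a + Real.tanh b = Real.sinh (a + b) / (Real.cosh a * Real.cosh b) := by
      rw [Real.tanh_eq_sinh_div_cosh, Real.tanh_eq_sinh_div_cosh, Real.sinh_add]
      field_simp
    have hcc : Real.cosh (a + b) + Real.cosh (a - b) = 2 * (Real.cosh a * Real.cosh b) := by
      rw [Real.cosh_add, Real.cosh_sub]; ring
    rw [htanh, hsum, hcc]
    simp only [Gfun, if_neg hab]
    rw [div_div, inv_div]
    field_simp

set_option maxHeartbeats 1600000 in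
theorem lfun_inv_bounds (T : ℝ) (hT : 0 < T) (μ : ℝ) :
    ∃ C₁ C₂ : ℝ, 0 < C₁ ∧ 0 < C₂ ∧ ∀ p q : ℝ,
      C₁ * (1 + p ^ 2 + q ^ 2) ≤ (Lfun T μ p q)⁻¹ ∧
      (Lfun T μ p q)⁻¹ ≤ C₂ * (1 + p ^ 2 + q ^ 2) := by
  set K : ℝ := 1 + 2 * |μ| + 2 * T with hK
  set m : ℝ := |μ| / T with hm
  set D : ℝ := 1 + (1 + 2 * |μ|) / (2 * T) with hD
  have hK0 : 0 < K := by positivity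
  have hm0 : 0 ≤ m := by positivity
  have hD0 : 0 < D := by positivity
  refine ⟨T / (2 * K), T * (1 + 2 * Real.cosh m) * D, by positivity,
    by positivity, ?_⟩
  intro p q
  have hrep := Lfun_inv_eq T hT μ p q
  set a := (p ^ 2 - μ) / (2 * T) with ha
  set b := (q ^ 2 - μ) / (2 * T) with hb
  set u := a + b with hu
  set v := a - b with hv
  set s := p ^ 2 + q ^ 2 with hs
  have hs0 : 0 ≤ s := by positivity
  have hT2 : (0:ℝ) < 2 * T := by positivity
  have hus : s = 2 * T * u + 2 * μ := by
    rw [hu, ha, hb]; field_simp; ring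
  have hvq : v = (p ^ 2 - q ^ 2) / (2 * T) := by
    rw [hv, ha, hb]; ring
  clear_value K m D a b u v s
  have hvb : |v| ≤ |u| + m := by
    have h1 : |p ^ 2 - q ^ 2| ≤ s :=
      abs_le.mpr ⟨by nlinarith [sq_nonneg p, sq_nonneg q], by nlinarith [sq_nonneg p, sq_nonneg q]⟩
    have h2 : |v| ≤ s / (2 * T) := by
      rw [hvq, abs_div, abs_of_pos hT2]
      gcongr
    have h3 : s / (2 * T) ≤ |u| + m := by
      rw [div_le_iff₀ hT2, hm]
      have h4 : |μ| / T * (2 * T) = 2 * |μ| := by field_simp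
      nlinarith [le_abs_self u, le_abs_self μ, hus,
        mul_nonneg hT.le (sub_nonneg.mpr (le_abs_self u))]
    linarith
  have hcu : 0 < Real.cosh u := Real.cosh_pos u
  have hcv : 0 < Real.cosh v := Real.cosh_pos v
  have hcm : 0 < Real.cosh m := Real.cosh_pos m
  have hG : 0 < Gfun u := Gfun_pos u
  have hlow := cosh_mul_Gfun_lower u
  have hup := cosh_mul_Gfun_upper u
  have hcoshv : Real.cosh v ≤ 2 * Real.cosh u * Real.cosh m := by
    have h4 : Real.cosh v ≤ Real.cosh (|u| + m) := by
      apply Real.cosh_le_cosh.mpr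
      rw [abs_of_nonneg (by positivity : (0:ℝ) ≤ |u| + m)]
      exact hvb
    have h5 : Real.cosh (|u| + m) = Real.cosh |u| * Real.cosh m + Real.sinh |u| * Real.sinh m :=
      Real.cosh_add _ _
    have h6 : Real.sinh |u| < Real.cosh |u| := Real.sinh_lt_cosh _
    have h7 : Real.sinh m < Real.cosh m := Real.sinh_lt_cosh _
    have h8 : 0 ≤ Real.sinh |u| := Real.sinh_nonneg_iff.mpr (abs_nonneg u)
    have h9 : 0 ≤ Real.sinh m := Real.sinh_nonneg_iff.mpr hm0
    have h10 : Real.cosh |u| = Real.cosh u := Real.cosh_abs u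
    have h11 : Real.sinh |u| * Real.sinh m ≤ Real.cosh |u| * Real.cosh m :=
      mul_le_mul h6.le h7.le h9 (Real.cosh_pos _).le
    have h12 : Real.cosh |u| * Real.cosh m = Real.cosh u * Real.cosh m := by rw [h10]
    linarith
  have hgoal : 1 + p ^ 2 + q ^ 2 = 1 + s := by rw [hs]; ring
  constructor
  · -- lower bound
    rw [hrep, hgoal]
    have hKs : 1 + s ≤ K * (1 + |u|) := by
      rw [hK]
      nlinarith [le_abs_self u, le_abs_self μ, abs_nonneg u, abs_nonneg μ, hus,
        mul_nonneg hT.le (sub_nonneg.mpr (le_abs_self u)),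
        mul_nonneg (abs_nonneg μ) (abs_nonneg u)]
    have step1 : T / (2 * K) * (1 + s) ≤ T / (2 * K) * (K * (1 + |u|)) :=
      mul_le_mul_of_nonneg_left hKs (by positivity)
    have step2 : T / (2 * K) * (K * (1 + |u|)) = T * ((1 + |u|) / 2) := by
      field_simp
    have step3 : T * ((1 + |u|) / 2) ≤ T * (Real.cosh u * Gfun u) :=
      mul_le_mul_of_nonneg_left hlow hT.le
    have step4 : T * (Real.cosh u * Gfun u) ≤ T * (Real.cosh u + Real.cosh v) * Gfun u := by
      nlinarith [mul_nonneg (mul_nonneg hT.le hcv.le) hG.le]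
    calc T / (2 * K) * (1 + s) ≤ T * ((1 + |u|) / 2) := by rw [← step2]; exact step1
      _ ≤ T * (Real.cosh u * Gfun u) := step3
      _ ≤ T * (Real.cosh u + Real.cosh v) * Gfun u := step4
  · -- upper bound
    rw [hrep, hgoal]
    have hDs : 1 + |u| ≤ D * (1 + s) := by
      have h11 : 2 * T * D = 2 * T + 1 + 2 * |μ| := by
        rw [hD]; field_simp; ring
      have h12 : 2 * T * |u| ≤ s + 2 * |μ| := by
        rcases abs_cases u with ⟨h, _⟩ | ⟨h, _⟩ <;>
          nlinarith [le_abs_self μ, neg_abs_le μ, hus]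
      have h13 : 2 * T * (1 + |u|) ≤ 2 * T * (D * (1 + s)) := by
        rw [← mul_assoc, h11]
        nlinarith [abs_nonneg μ, mul_nonneg hT.le hs0, mul_nonneg (abs_nonneg μ) hs0]
      exact le_of_mul_le_mul_left h13 hT2
    have step1 : T * (Real.cosh u + Real.cosh v) * Gfun u ≤
        T * (1 + 2 * Real.cosh m) * (Real.cosh u * Gfun u) := by
      have key : T * Gfun u * (Real.cosh u + Real.cosh v) ≤
          T * Gfun u * ((1 + 2 * Real.cosh m) * Real.cosh u) :=
        mul_le_mul_of_nonneg_left (by linarith) (by positivity)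
      nlinarith [key]
    have step2 : T * (1 + 2 * Real.cosh m) * (Real.cosh u * Gfun u) ≤
        T * (1 + 2 * Real.cosh m) * (1 + |u|) :=
      mul_le_mul_of_nonneg_left hup (by positivity)
    have step3 : T * (1 + 2 * Real.cosh m) * (1 + |u|) ≤
        T * (1 + 2 * Real.cosh m) * (D * (1 + s)) :=
      mul_le_mul_of_nonneg_left hDs (by positivity)
    calc T * (Real.cosh u + Real.cosh v) * Gfun u
        ≤ T * (1 + 2 * Real.cosh m) * (Real.cosh u * Gfun u) := step1
      _ ≤ T * (1 + 2 * Real.cosh m) * (1 + |u|) := step2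
      _ ≤ T * (1 + 2 * Real.cosh m) * (D * (1 + s)) := step3
      _ = T * (1 + 2 * Real.cosh m) * D * (1 + s) := by ring
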